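/- Let T, T̄ be symmetric matrices where T = P^{-1/2} Q P^{-1/2} and T̄ = P̄^{-1/2} Q̄ P̄^{-1/2}, with P = L⁻ + τ⁺I, P̄ = L̄⁻ + τ⁺I, Q = L⁺ + τ⁻I, Q̄ = L̄⁺ + τ⁻I, where L⁻, L̄⁻, L⁺, L̄⁺ are positive semidefinite symmetric matrices and τ⁺ > 0, τ⁻ ≥ 0. If ‖P − P̄‖ ≤ Δ_P and ‖Q − Q̄‖ ≤ Δ_Q, then ‖T − T̄‖ ≤ ((‖Q̄‖ + Δ_Q)/τ⁺)·(Δ_P/τ⁺ + 2√(Δ_P/τ⁺)) + Δ_Q/τ⁺. -/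

import Mathlib

open Matrix

/-- The spectral (ℓ²-operator) norm of a square real matrix. -/
noncomputable def specNorm {n : ℕ} (A : Matrix (Fin n) (Fin n) ℝ) : ℝ :=
  ‖Matrix.toEuclideanCLM (𝕜 := ℝ) A‖

section

open scoped ComplexOrder

/-- The positive semidefinite square root of a positive semidefinite matrix
(the definition removed from Mathlib, restored with its old meaning). -/
noncomputable def Matrix.PosSemidef.sqrt {n : Type*} [Fintype n] [DecidableEq n]
    {𝕜 : Type*} [RCLike 𝕜] {A : Matrix n n 𝕜} (hA : A.PosSemidef) : Matrix n n 𝕜 :=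
  hA.1.eigenvectorUnitary.1 * diagonal ((↑) ∘ (√·) ∘ hA.1.eigenvalues) *
  (star hA.1.eigenvectorUnitary : Matrix n n 𝕜)

end

open scoped Matrix.Norms.L2Operator

namespace SpongeAux

variable {n : ℕ}

local notation "Mat" => Matrix (Fin n) (Fin n) ℝ

lemma norm_one_le : ‖(1 : Mat)‖ ≤ 1 := by
  rw [Matrix.cstar_norm_def, _root_.map_one]
  exact ContinuousLinearMap.norm_id_le

lemma norm_unitary (U : Matrix.unitaryGroup (Fin n) ℝ) : ‖(U : Mat)‖ ≤ 1 := by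
  have h1 : star (U : Mat) * U = 1 := Unitary.coe_star_mul_self U
  have h2 : ‖star (U : Mat) * U‖ = ‖(U : Mat)‖ * ‖(U : Mat)‖ := CStarRing.norm_star_mul_self
  have h3 : ‖(U : Mat)‖ * ‖(U : Mat)‖ ≤ 1 := by rw [← h2, h1]; exact norm_one_le
  nlinarith [norm_nonneg (U : Mat)]

lemma norm_conj (U : Matrix.unitaryGroup (Fin n) ℝ) (A : Mat) :
    ‖(U : Mat) * A * star (U : Mat)‖ ≤ ‖A‖ := by
  have hs : ‖star (U : Mat)‖ ≤ 1 := by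
    rw [Matrix.star_eq_conjTranspose, Matrix.l2_opNorm_conjTranspose]
    exact norm_unitary U
  calc ‖(U : Mat) * A * star (U : Mat)‖
      ≤ ‖(U : Mat) * A‖ * ‖star (U : Mat)‖ := Matrix.l2_opNorm_mul _ _
    _ ≤ (‖(U : Mat)‖ * ‖A‖) * 1 := by
        apply mul_le_mul (Matrix.l2_opNorm_mul _ _) hs (norm_nonneg _); positivity
    _ ≤ (1 * ‖A‖) * 1 := by
        have := norm_unitary U; have := norm_nonneg A; nlinarith
    _ = ‖A‖ := by ring

lemma norm_diagonal_le {d : Fin n → ℝ} {c : ℝ} (hc : 0 ≤ c) (h : ∀ i, |d i| ≤ c) :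
    ‖(Matrix.diagonal d : Mat)‖ ≤ c := by
  rw [Matrix.l2_opNorm_diagonal]
  exact (pi_norm_le_iff_of_nonneg hc).mpr fun i => by simpa [Real.norm_eq_abs] using h i

lemma basis_selfdot {M : Mat} (hM : M.IsHermitian) (i : Fin n) :
    (⇑(hM.eigenvectorBasis i) : Fin n → ℝ) ⬝ᵥ ⇑(hM.eigenvectorBasis i) = 1 := by
  have h := hM.eigenvectorBasis.orthonormal.1 i
  have h2 : (inner ℝ (hM.eigenvectorBasis i) (hM.eigenvectorBasis i) : ℝ) = 1 := by
    rw [real_inner_self_eq_norm_mul_norm, h]; ring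
  rw [← h2, PiLp.inner_apply]
  simp [dotProduct, mul_comm, sq]

lemma eig_le {M : Mat} (hM : M.IsHermitian) {c : ℝ}
    (h : (c • (1 : Mat) - M).PosSemidef) (i : Fin n) : hM.eigenvalues i ≤ c := by
  set v : Fin n → ℝ := ⇑(hM.eigenvectorBasis i) with hv
  have hvv : v ⬝ᵥ v = 1 := basis_selfdot hM i
  have hev : M *ᵥ v = hM.eigenvalues i • v := hM.mulVec_eigenvectorBasis i
  have h2 := h.dotProduct_mulVec_nonneg v
  rw [Matrix.sub_mulVec, Matrix.smul_mulVec, Matrix.one_mulVec, hev] at h2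
  simp only [star_trivial, dotProduct_sub, dotProduct_smul, smul_eq_mul, hvv] at h2
  linarith

lemma eig_ge {M : Mat} (hM : M.IsHermitian) {c : ℝ}
    (h : (c • (1 : Mat) + M).PosSemidef) (i : Fin n) : -c ≤ hM.eigenvalues i := by
  set v : Fin n → ℝ := ⇑(hM.eigenvectorBasis i) with hv
  have hvv : v ⬝ᵥ v = 1 := basis_selfdot hM i
  have hev : M *ᵥ v = hM.eigenvalues i • v := hM.mulVec_eigenvectorBasis i
  have h2 := h.dotProduct_mulVec_nonneg v
  rw [Matrix.add_mulVec, Matrix.smul_mulVec, Matrix.one_mulVec, hev] at h2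
  simp only [star_trivial, dotProduct_add, dotProduct_smul, smul_eq_mul, hvv] at h2
  linarith

lemma eig_lower {M : Mat} (hM : M.IsHermitian) {τ : ℝ}
    (h : (M - τ • (1 : Mat)).PosSemidef) (i : Fin n) : τ ≤ hM.eigenvalues i := by
  set v : Fin n → ℝ := ⇑(hM.eigenvectorBasis i) with hv
  have hvv : v ⬝ᵥ v = 1 := basis_selfdot hM i
  have hev : M *ᵥ v = hM.eigenvalues i • v := hM.mulVec_eigenvectorBasis i
  have h2 := h.dotProduct_mulVec_nonneg v
  rw [Matrix.sub_mulVec, Matrix.smul_mulVec, Matrix.one_mulVec, hev] at h2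
  simp only [star_trivial, dotProduct_sub, dotProduct_smul, smul_eq_mul, hvv] at h2
  linarith

lemma norm_le_of_eig {M : Mat} (hM : M.IsHermitian) {c : ℝ} (hc : 0 ≤ c)
    (h : ∀ i, |hM.eigenvalues i| ≤ c) : ‖M‖ ≤ c := by
  conv_lhs => rw [hM.spectral_theorem]
  rw [Unitary.conjStarAlgAut_apply]
  refine le_trans (norm_conj _ _) ?_
  have : Matrix.diagonal (RCLike.ofReal ∘ hM.eigenvalues) =
      (Matrix.diagonal hM.eigenvalues : Mat) := by
    congr 1
  rw [this]
  exact norm_diagonal_le hc h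

lemma norm_psd_le {M : Mat} (hM : M.IsHermitian) {c : ℝ} (hc : 0 ≤ c)
    (h1 : (c • (1 : Mat) - M).PosSemidef) (h2 : (c • (1 : Mat) + M).PosSemidef) : ‖M‖ ≤ c :=
  norm_le_of_eig hM hc fun i => abs_le.mpr ⟨eig_ge hM h2 i, eig_le hM h1 i⟩

lemma abs_dot_le (M : Mat) (x : Fin n → ℝ) : |x ⬝ᵥ (M *ᵥ x)| ≤ ‖M‖ * (x ⬝ᵥ x) := by
  set x' : EuclideanSpace ℝ (Fin n) := WithLp.toLp 2 x with hx'
  have hMx : WithLp.toLp 2 (M *ᵥ x) = Matrix.toEuclideanCLM (𝕜 := ℝ) M x' := by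
    rw [hx', Matrix.toEuclideanCLM_toLp]
  have hdot : x ⬝ᵥ (M *ᵥ x) = (inner ℝ x' (WithLp.toLp 2 (M *ᵥ x)) : ℝ) := by
    rw [PiLp.inner_apply]; simp [dotProduct, hx', mul_comm]
  have hself : x ⬝ᵥ x = ‖x'‖ * ‖x'‖ := by
    rw [← real_inner_self_eq_norm_mul_norm, PiLp.inner_apply]
    simp [dotProduct, hx', sq]
  rw [hdot, hself, hMx]
  calc |(inner ℝ x' (Matrix.toEuclideanCLM (𝕜 := ℝ) M x') : ℝ)|
      ≤ ‖x'‖ * ‖Matrix.toEuclideanCLM (𝕜 := ℝ) M x'‖ := abs_real_inner_le_norm _ _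
    _ ≤ ‖x'‖ * (‖M‖ * ‖x'‖) := by
        apply mul_le_mul_of_nonneg_left _ (norm_nonneg _)
        exact (Matrix.toEuclideanCLM (𝕜 := ℝ) M).le_opNorm x'
    _ = ‖M‖ * (‖x'‖ * ‖x'‖) := by ring

lemma dotProduct_self_nonneg' (x : Fin n → ℝ) : 0 ≤ x ⬝ᵥ x :=
  Finset.sum_nonneg fun i _ => mul_self_nonneg (x i)

lemma sqrt_eq {P : Mat} (hP : P.PosSemidef) :
    hP.sqrt = (hP.1.eigenvectorUnitary : Mat) *
      Matrix.diagonal (fun i => Real.sqrt (hP.1.eigenvalues i)) *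
      star (hP.1.eigenvectorUnitary : Mat) := by
  rw [Matrix.PosSemidef.sqrt]
  congr 2

lemma _root_.Matrix.PosSemidef.posSemidef_sqrt {P : Mat} (hP : P.PosSemidef) :
    hP.sqrt.PosSemidef := by
  rw [sqrt_eq hP, Matrix.star_eq_conjTranspose]
  apply Matrix.PosSemidef.mul_mul_conjTranspose_same
  rw [Matrix.posSemidef_diagonal_iff]
  intro i
  exact Real.sqrt_nonneg _

lemma _root_.Matrix.PosSemidef.sqrt_mul_self {P : Mat} (hP : P.PosSemidef) :
    hP.sqrt * hP.sqrt = P := by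
  have hUU : star (hP.1.eigenvectorUnitary : Mat) * (hP.1.eigenvectorUnitary : Mat) = 1 :=
    Unitary.coe_star_mul_self hP.1.eigenvectorUnitary
  rw [sqrt_eq hP]
  conv_rhs => rw [hP.1.spectral_theorem, Unitary.conjStarAlgAut_apply]
  calc _ = (hP.1.eigenvectorUnitary : Mat) *
        (Matrix.diagonal (fun i => Real.sqrt (hP.1.eigenvalues i)) *
          (star (hP.1.eigenvectorUnitary : Mat) * (hP.1.eigenvectorUnitary : Mat)) *
          Matrix.diagonal (fun i => Real.sqrt (hP.1.eigenvalues i))) *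
        star (hP.1.eigenvectorUnitary : Mat) := by simp only [Matrix.mul_assoc]
    _ = _ := by
      rw [hUU, mul_one, Matrix.diagonal_mul_diagonal]
      congr 3
      funext i
      simp only [Function.comp_apply, RCLike.ofReal_real_eq_id, id]
      exact Real.mul_self_sqrt (hP.eigenvalues_nonneg i)

lemma conj_smul_one (U : Matrix.unitaryGroup (Fin n) ℝ) (c : ℝ) :
    (U : Mat) * (c • 1) * star (U : Mat) = c • (1 : Mat) := by
  rw [Matrix.mul_smul, mul_one, Matrix.smul_mul]
  congr 1
  exact Matrix.mem_unitaryGroup_iff.mp U.2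

/-- lower bound on sqrt: if `P ⪰ τ•1` then `√P ⪰ √τ•1`. -/
lemma sqrt_lower {P : Mat} (hP : P.PosSemidef) {τ : ℝ} (hτ : 0 ≤ τ)
    (hlow : (P - τ • (1 : Mat)).PosSemidef) :
    (hP.sqrt - Real.sqrt τ • (1 : Mat)).PosSemidef := by
  have heig : ∀ i, τ ≤ hP.1.eigenvalues i := eig_lower hP.1 hlow
  rw [sqrt_eq hP, ← conj_smul_one hP.1.eigenvectorUnitary (Real.sqrt τ)]
  rw [Matrix.smul_one_eq_diagonal]
  rw [← Matrix.sub_mul, ← Matrix.mul_sub, Matrix.diagonal_sub]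
  rw [Matrix.star_eq_conjTranspose]
  apply Matrix.PosSemidef.mul_mul_conjTranspose_same
  rw [Matrix.posSemidef_diagonal_iff]
  intro i
  have h1 := Real.sqrt_le_sqrt (heig i)
  simp only [Pi.sub_apply, sub_nonneg]
  try simpa [sub_nonneg] using h1
  try linarith

lemma quad_lower {S : Mat} {s : ℝ} (h : (S - s • (1 : Mat)).PosSemidef) (v : Fin n → ℝ) :
    s * (v ⬝ᵥ v) ≤ v ⬝ᵥ (S *ᵥ v) := by
  have h2 := h.dotProduct_mulVec_nonneg v
  rw [Matrix.sub_mulVec, Matrix.smul_mulVec, Matrix.one_mulVec] at h2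
  simp only [star_trivial, dotProduct_sub, dotProduct_smul, smul_eq_mul,
    smul_dotProduct] at h2
  linarith

/-- explicit inverse of the sqrt and its norm bound -/
lemma inv_sqrt_eq {P : Mat} (hP : P.PosSemidef) {τ : ℝ} (hτ : 0 < τ)
    (hlow : (P - τ • (1 : Mat)).PosSemidef) :
    (hP.sqrt)⁻¹ = (hP.1.eigenvectorUnitary : Mat) *
      Matrix.diagonal (fun i => (Real.sqrt (hP.1.eigenvalues i))⁻¹) *
      star (hP.1.eigenvectorUnitary : Mat) := by
  have heig : ∀ i, τ ≤ hP.1.eigenvalues i := eig_lower hP.1 hlow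
  have hpos : ∀ i, 0 < Real.sqrt (hP.1.eigenvalues i) := fun i =>
    Real.sqrt_pos.mpr (lt_of_lt_of_le hτ (heig i))
  apply Matrix.inv_eq_left_inv
  rw [sqrt_eq hP]
  have hUU : star (hP.1.eigenvectorUnitary : Mat) * (hP.1.eigenvectorUnitary : Mat) = 1 :=
    Unitary.coe_star_mul_self hP.1.eigenvectorUnitary
  calc (hP.1.eigenvectorUnitary : Mat) *
        Matrix.diagonal (fun i => (Real.sqrt (hP.1.eigenvalues i))⁻¹) *
        star (hP.1.eigenvectorUnitary : Mat) *
        ((hP.1.eigenvectorUnitary : Mat) *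
          Matrix.diagonal (fun i => Real.sqrt (hP.1.eigenvalues i)) *
          star (hP.1.eigenvectorUnitary : Mat))
      = (hP.1.eigenvectorUnitary : Mat) *
        (Matrix.diagonal (fun i => (Real.sqrt (hP.1.eigenvalues i))⁻¹) *
          (star (hP.1.eigenvectorUnitary : Mat) * (hP.1.eigenvectorUnitary : Mat)) *
          Matrix.diagonal (fun i => Real.sqrt (hP.1.eigenvalues i))) *
        star (hP.1.eigenvectorUnitary : Mat) := by
        simp only [Matrix.mul_assoc]
    _ = 1 := by
        rw [hUU, mul_one, Matrix.diagonal_mul_diagonal]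
        have : (fun i => (Real.sqrt (hP.1.eigenvalues i))⁻¹ * Real.sqrt (hP.1.eigenvalues i))
            = fun _ => (1 : ℝ) := by
          funext i; exact inv_mul_cancel₀ (hpos i).ne'
        rw [this, Matrix.diagonal_one, mul_one]
        exact Matrix.mem_unitaryGroup_iff.mp hP.1.eigenvectorUnitary.2

lemma inv_sqrt_norm {P : Mat} (hP : P.PosSemidef) {τ : ℝ} (hτ : 0 < τ)
    (hlow : (P - τ • (1 : Mat)).PosSemidef) :
    ‖(hP.sqrt)⁻¹‖ ≤ (Real.sqrt τ)⁻¹ := by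
  have heig : ∀ i, τ ≤ hP.1.eigenvalues i := eig_lower hP.1 hlow
  have hsτ : 0 < Real.sqrt τ := Real.sqrt_pos.mpr hτ
  rw [inv_sqrt_eq hP hτ hlow]
  refine le_trans (norm_conj _ _) (norm_diagonal_le (by positivity) fun i => ?_)
  have hpos : 0 < Real.sqrt (hP.1.eigenvalues i) :=
    Real.sqrt_pos.mpr (lt_of_lt_of_le hτ (heig i))
  rw [abs_of_pos (by positivity)]
  exact inv_anti₀ hsτ (Real.sqrt_le_sqrt (heig i))

/-- √A − √B perturbation bound -/
lemma sqrt_perturb {A B : Mat} (hA : A.PosSemidef) (hB : B.PosSemidef) {τ Δ : ℝ}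
    (hτ : 0 < τ)
    (hlowA : (A - τ • (1 : Mat)).PosSemidef) (hlowB : (B - τ • (1 : Mat)).PosSemidef)
    (hΔ : ‖A - B‖ ≤ Δ) : ‖hA.sqrt - hB.sqrt‖ ≤ Δ / (2 * Real.sqrt τ) := by
  have hΔ0 : 0 ≤ Δ := le_trans (norm_nonneg _) hΔ
  have hsτ : 0 < Real.sqrt τ := Real.sqrt_pos.mpr hτ
  have hc0 : 0 ≤ Δ / (2 * Real.sqrt τ) := by positivity
  set D : Mat := hA.sqrt - hB.sqrt with hD
  have hDh : D.IsHermitian := (hA.posSemidef_sqrt.1).sub (hB.posSemidef_sqrt.1)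
  refine norm_le_of_eig hDh hc0 fun i => ?_
  set v : Fin n → ℝ := ⇑(hDh.eigenvectorBasis i) with hv
  set μ : ℝ := hDh.eigenvalues i with hμ
  have hvv : v ⬝ᵥ v = 1 := basis_selfdot hDh i
  have hev : D *ᵥ v = μ • v := hDh.mulVec_eigenvectorBasis i
  have hkey : hA.sqrt * D + D * hB.sqrt = A - B := by
    rw [hD, mul_sub, sub_mul, hA.sqrt_mul_self, hB.sqrt_mul_self]
    abel
  -- quadratic values
  have hSA := quad_lower (sqrt_lower hA hτ.le hlowA) v
  have hSB := quad_lower (sqrt_lower hB hτ.le hlowB) v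
  rw [hvv, mul_one] at hSA hSB
  -- evaluate at v
  have hDt : Dᵀ = D := by
    rw [← Matrix.conjTranspose_eq_transpose_of_trivial, hDh.eq]
  have hsym : ∀ w : Fin n → ℝ, v ⬝ᵥ (D *ᵥ w) = (D *ᵥ v) ⬝ᵥ w := by
    intro w
    rw [Matrix.dotProduct_mulVec, ← Matrix.mulVec_transpose, hDt]
  have hquad : μ * (v ⬝ᵥ (hA.sqrt *ᵥ v)) + μ * (v ⬝ᵥ (hB.sqrt *ᵥ v)) = v ⬝ᵥ ((A - B) *ᵥ v) := by
    rw [← hkey, Matrix.add_mulVec, dotProduct_add]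
    congr 1
    · rw [← Matrix.mulVec_mulVec, hev, Matrix.mulVec_smul, dotProduct_smul, smul_eq_mul]
    · rw [← Matrix.mulVec_mulVec, hsym, hev, smul_dotProduct, smul_eq_mul]
  have habs : |v ⬝ᵥ ((A - B) *ᵥ v)| ≤ Δ := by
    have := abs_dot_le (A - B) v
    rw [hvv, mul_one] at this
    exact this.trans hΔ
  have hsum : 2 * Real.sqrt τ ≤ (v ⬝ᵥ (hA.sqrt *ᵥ v)) + (v ⬝ᵥ (hB.sqrt *ᵥ v)) := by linarith
  rw [le_div_iff₀ (by positivity)]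
  have h1 : |μ| * (2 * Real.sqrt τ) ≤ |μ| * ((v ⬝ᵥ (hA.sqrt *ᵥ v)) + (v ⬝ᵥ (hB.sqrt *ᵥ v))) :=
    mul_le_mul_of_nonneg_left hsum (abs_nonneg μ)
  have h2 : |μ| * ((v ⬝ᵥ (hA.sqrt *ᵥ v)) + (v ⬝ᵥ (hB.sqrt *ᵥ v)))
      = |μ * (v ⬝ᵥ (hA.sqrt *ᵥ v)) + μ * (v ⬝ᵥ (hB.sqrt *ᵥ v))| := by
    rw [← mul_add, abs_mul, abs_of_nonneg (by linarith : (0:ℝ) ≤ (v ⬝ᵥ (hA.sqrt *ᵥ v)) + (v ⬝ᵥ (hB.sqrt *ᵥ v)))]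
  rw [h2, hquad] at h1
  linarith [h1.trans habs]



lemma posdef_of_lower {S : Mat} (hS : S.IsHermitian) {s : ℝ} (hs : 0 < s)
    (h : (S - s • (1 : Mat)).PosSemidef) : S.PosDef := by
  refine Matrix.PosDef.of_dotProduct_mulVec_pos hS fun x hx => ?_
  have h1 := quad_lower h x
  have h2 : 0 < x ⬝ᵥ x := by
    rcases lt_or_eq_of_le (dotProduct_self_nonneg' x) with h' | h'
    · exact h'
    · exact absurd ((dotProduct_self_eq_zero).mp h'.symm) hx
  simp only [star_trivial]
  calc (0:ℝ) < s * (x ⬝ᵥ x) := by positivity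
    _ ≤ x ⬝ᵥ (S *ᵥ x) := h1

lemma norm_mul3 (A B C : Mat) : ‖A * B * C‖ ≤ ‖A‖ * ‖B‖ * ‖C‖ :=
  (Matrix.l2_opNorm_mul _ _).trans
    (mul_le_mul_of_nonneg_right (Matrix.l2_opNorm_mul _ _) (norm_nonneg _))

lemma specNorm_def (A : Mat) : specNorm A = ‖A‖ := rfl

end SpongeAux

set_option maxHeartbeats 1600000 in
open SpongeAux in
/-- Perturbation bound for `T = P^{-1/2} Q P^{-1/2}` versus
`T̄ = P̄^{-1/2} Q̄ P̄^{-1/2}` with `P = L⁻ + τ⁺I`, `P̄ = L̄⁻ + τ⁺I`,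
`Q = L⁺ + τ⁻I`, `Q̄ = L̄⁺ + τ⁻I` for PSD `L⁻, L̄⁻, L⁺, L̄⁺`, `τ⁺ > 0`,
`τ⁻ ≥ 0`: if `‖P - P̄‖ ≤ Δ_P` and `‖Q - Q̄‖ ≤ Δ_Q`, then
`‖T - T̄‖ ≤ ((‖Q̄‖+Δ_Q)/τ⁺)(Δ_P/τ⁺ + 2√(Δ_P/τ⁺)) + Δ_Q/τ⁺`. -/
theorem sponge_operator_perturbation {n : ℕ}
    (Lm Lmb Lp Lpb P Pb Q Qb T Tb : Matrix (Fin n) (Fin n) ℝ)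
    (τp τm ΔP ΔQ : ℝ) (hτp : 0 < τp) (hτm : 0 ≤ τm)
    (hLm : Lm.PosSemidef) (hLmb : Lmb.PosSemidef)
    (hLp : Lp.PosSemidef) (hLpb : Lpb.PosSemidef)
    (hPdef : P = Lm + τp • (1 : Matrix (Fin n) (Fin n) ℝ))
    (hPbdef : Pb = Lmb + τp • (1 : Matrix (Fin n) (Fin n) ℝ))
    (hQdef : Q = Lp + τm • (1 : Matrix (Fin n) (Fin n) ℝ))
    (hQbdef : Qb = Lpb + τm • (1 : Matrix (Fin n) (Fin n) ℝ))
    (hP : P.PosSemidef) (hPb : Pb.PosSemidef)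
    (hTdef : T = (hP.sqrt)⁻¹ * Q * (hP.sqrt)⁻¹)
    (hTbdef : Tb = (hPb.sqrt)⁻¹ * Qb * (hPb.sqrt)⁻¹)
    (hΔP : specNorm (P - Pb) ≤ ΔP) (hΔQ : specNorm (Q - Qb) ≤ ΔQ) :
    specNorm (T - Tb)
      ≤ ((specNorm Qb + ΔQ) / τp) * (ΔP / τp + 2 * Real.sqrt (ΔP / τp))
        + ΔQ / τp := by
  simp only [specNorm_def] at hΔP hΔQ ⊢
  -- basic positivity
  have hΔP0 : 0 ≤ ΔP := le_trans (norm_nonneg _) hΔP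
  have hΔQ0 : 0 ≤ ΔQ := le_trans (norm_nonneg _) hΔQ
  have hsτ : 0 < Real.sqrt τp := Real.sqrt_pos.mpr hτp
  have hττ : Real.sqrt τp * Real.sqrt τp = τp := Real.mul_self_sqrt hτp.le
  -- lower bounds P ⪰ τp, Pb ⪰ τp
  have hPlow : (P - τp • (1 : Matrix (Fin n) (Fin n) ℝ)).PosSemidef := by
    rw [hPdef, add_sub_cancel_right]; exact hLm
  have hPblow : (Pb - τp • (1 : Matrix (Fin n) (Fin n) ℝ)).PosSemidef := by
    rw [hPbdef, add_sub_cancel_right]; exact hLmb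
  -- invertibility of square roots
  have hPsd : (hP.sqrt).PosDef :=
    posdef_of_lower hP.posSemidef_sqrt.1 hsτ (sqrt_lower hP hτp.le hPlow)
  have hPbsd : (hPb.sqrt).PosDef :=
    posdef_of_lower hPb.posSemidef_sqrt.1 hsτ (sqrt_lower hPb hτp.le hPblow)
  have hPu : IsUnit (hP.sqrt).det := hPsd.det_pos.ne'.isUnit
  have hPbu : IsUnit (hPb.sqrt).det := hPbsd.det_pos.ne'.isUnit
  -- norm bounds for inverse square roots
  have ha : ‖(hP.sqrt)⁻¹‖ ≤ (Real.sqrt τp)⁻¹ := inv_sqrt_norm hP hτp hPlow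
  have hab : ‖(hPb.sqrt)⁻¹‖ ≤ (Real.sqrt τp)⁻¹ := inv_sqrt_norm hPb hτp hPblow
  -- perturbation of square roots
  have hDs : ‖hP.sqrt - hPb.sqrt‖ ≤ ΔP / (2 * Real.sqrt τp) :=
    sqrt_perturb hP hPb hτp hPlow hPblow hΔP
  -- difference of the inverses
  have hR : (hP.sqrt)⁻¹ - (hPb.sqrt)⁻¹
      = (hP.sqrt)⁻¹ * (hPb.sqrt - hP.sqrt) * (hPb.sqrt)⁻¹ := by
    rw [Matrix.mul_sub, Matrix.sub_mul]
    rw [Matrix.mul_assoc (hP.sqrt)⁻¹ hPb.sqrt (hPb.sqrt)⁻¹,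
      Matrix.mul_nonsing_inv _ hPbu, mul_one,
      Matrix.nonsing_inv_mul _ hPu, one_mul]
  have hRnorm : ‖(hP.sqrt)⁻¹ - (hPb.sqrt)⁻¹‖
      ≤ (Real.sqrt τp)⁻¹ * (ΔP / (2 * Real.sqrt τp)) * (Real.sqrt τp)⁻¹ := by
    rw [hR]
    refine (norm_mul3 _ _ _).trans ?_
    have h1 : ‖hPb.sqrt - hP.sqrt‖ ≤ ΔP / (2 * Real.sqrt τp) := by
      rw [norm_sub_rev]; exact hDs
    gcongr
  -- norm bound for Q
  have hQn : ‖Q‖ ≤ ‖Qb‖ + ΔQ := by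
    calc ‖Q‖ = ‖Qb + (Q - Qb)‖ := by congr 1; abel
      _ ≤ ‖Qb‖ + ‖Q - Qb‖ := norm_add_le _ _
      _ ≤ ‖Qb‖ + ΔQ := by linarith
  have hQb0 : 0 ≤ ‖Qb‖ := norm_nonneg _
  -- decomposition
  have hsplit : T - Tb
      = ((hP.sqrt)⁻¹ - (hPb.sqrt)⁻¹) * Q * (hP.sqrt)⁻¹
        + (hPb.sqrt)⁻¹ * (Q - Qb) * (hP.sqrt)⁻¹
        + (hPb.sqrt)⁻¹ * Qb * ((hP.sqrt)⁻¹ - (hPb.sqrt)⁻¹) := by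
    rw [hTdef, hTbdef]; noncomm_ring
  set s : ℝ := Real.sqrt τp with hs
  set rB : ℝ := s⁻¹ * (ΔP / (2 * s)) * s⁻¹ with hrB
  have hrB0 : 0 ≤ rB := by positivity
  have ht1 : ‖((hP.sqrt)⁻¹ - (hPb.sqrt)⁻¹) * Q * (hP.sqrt)⁻¹‖
      ≤ rB * (‖Qb‖ + ΔQ) * s⁻¹ := by
    refine (norm_mul3 _ _ _).trans ?_
    gcongr <;> positivity
  have ht2 : ‖(hPb.sqrt)⁻¹ * (Q - Qb) * (hP.sqrt)⁻¹‖ ≤ s⁻¹ * ΔQ * s⁻¹ := by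
    refine (norm_mul3 _ _ _).trans ?_
    gcongr <;> positivity
  have ht3 : ‖(hPb.sqrt)⁻¹ * Qb * ((hP.sqrt)⁻¹ - (hPb.sqrt)⁻¹)‖ ≤ s⁻¹ * ‖Qb‖ * rB := by
    refine (norm_mul3 _ _ _).trans ?_
    gcongr <;> positivity
  have hmid : ‖T - Tb‖ ≤ (‖Qb‖ + ΔQ) * ΔP / τp ^ 2 + ΔQ / τp := by
    calc ‖T - Tb‖ ≤ rB * (‖Qb‖ + ΔQ) * s⁻¹ + s⁻¹ * ΔQ * s⁻¹ + s⁻¹ * ‖Qb‖ * rB := by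
          rw [hsplit]
          exact le_trans (norm_add₃_le) (by linarith)
      _ ≤ (‖Qb‖ + ΔQ) * ΔP / τp ^ 2 + ΔQ / τp := by
          have hs0 : s ≠ 0 := hsτ.ne'
          have e1 : rB * (‖Qb‖ + ΔQ) * s⁻¹ = (‖Qb‖ + ΔQ) * ΔP / (2 * τp ^ 2) := by
            rw [hrB, ← hττ]; field_simp
          have e2 : s⁻¹ * ΔQ * s⁻¹ = ΔQ / τp := by
            rw [← hττ]; field_simp
          have e3 : s⁻¹ * ‖Qb‖ * rB = ‖Qb‖ * ΔP / (2 * τp ^ 2) := by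
            rw [hrB, ← hττ]; field_simp
            all_goals exact Or.inl (by ring)
          rw [e1, e2, e3]
          have e4 : (‖Qb‖ + ΔQ) * ΔP / τp ^ 2
              = (‖Qb‖ + ΔQ) * ΔP / (2 * τp ^ 2) + ‖Qb‖ * ΔP / (2 * τp ^ 2)
                + ΔQ * ΔP / (2 * τp ^ 2) := by ring
          have e5 : (0:ℝ) ≤ ΔQ * ΔP / (2 * τp ^ 2) := by positivity
          linarith
  have hexp : ((‖Qb‖ + ΔQ) / τp) * (ΔP / τp + 2 * Real.sqrt (ΔP / τp)) + ΔQ / τp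
      = (‖Qb‖ + ΔQ) * ΔP / τp ^ 2 + ΔQ / τp
        + ((‖Qb‖ + ΔQ) / τp) * (2 * Real.sqrt (ΔP / τp)) := by
    field_simp
    ring
  have hpos : 0 ≤ ((‖Qb‖ + ΔQ) / τp) * (2 * Real.sqrt (ΔP / τp)) := by positivity
  rw [hexp]
  linarith
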